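/- Let Z be an n-dimensional naturally graded p-filiform complex Zinbiel algebra of first type with n−p ≥ 3, adapted basis {e_1,…,e_{n−p},f_1,…,f_p}, and suppose r_i = 1 for all 1 ≤ i ≤ p (i.e., all f_i lie in the first graded component Z_1). Then Z is split: Z ≅ NF_{n−p} ⊕ ℂ^p, where NF_{n−p} is the (n−p)-dimensional null-filiform Zinbiel algebra with products e_i∘e_j = C(i+j−1, j) e_{i+j} for 2 ≤ i+j ≤ n−p, and ℂ^p = ⟨f_1⟩ ⊕ ⋯ ⊕ ⟨f_p⟩ carries the zero multiplication. -/

import Mathlib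

open Module Submodule

/-- The Zinbiel identity for a bilinear operation `mul` on a complex vector space:
`(x∘y)∘z = x∘(y∘z) + x∘(z∘y)`. -/
def IsZinbiel {Z : Type*} [AddCommGroup Z] [Module ℂ Z] (mul : Z →ₗ[ℂ] Z →ₗ[ℂ] Z) : Prop :=
  ∀ x y z : Z, mul (mul x y) z = mul x (mul y z) + mul x (mul z y)
/-- The square `Z ∘ Z` of the algebra. -/
def algSq {Z : Type*} [AddCommGroup Z] [Module ℂ Z] (mul : Z →ₗ[ℂ] Z →ₗ[ℂ] Z) :
    Submodule ℂ Z :=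
  Submodule.span ℂ {z | ∃ x y, z = mul x y}
/-- `C(Z) = (n-p, 1, …, 1)` (`p`-filiformity) expressed via the left multiplication
operators: for every `x ∉ Z²` the nilpotent operator `L_x` satisfies `L_x^(n-p) = 0`
and has rank at most `n-p-1`; this says exactly that the Jordan type of every `L_x`
is lexicographically at most `(n-p, 1, …, 1)`. -/
def CharSeqMax {Z : Type*} [AddCommGroup Z] [Module ℂ Z]
    (mul : Z →ₗ[ℂ] Z →ₗ[ℂ] Z) (n p : ℕ) : Prop :=
  ∀ x : Z, x ∉ algSq mul →
    ((mul x : Module.End ℂ Z) ^ (n - p) = 0) ∧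
      Module.finrank ℂ (LinearMap.range (mul x)) ≤ n - p - 1
/-- The adapted family `e_1, …, e_m, f_1, …, f_p` indexed by `Fin m ⊕ Fin p`. -/
def adaptedFam {Z : Type*} (m p : ℕ) (e f : ℕ → Z) : Fin m ⊕ Fin p → Z :=
  Sum.elim (fun i => e ((i : ℕ) + 1)) (fun j => f ((j : ℕ) + 1))
/-- The multiplication of the split algebra `NF_m ⊕ ℂ^q`: on coordinates, the first
component carries the null-filiform products `e_i ∘ e_j = C(i+j-1, j) e_{i+j}`
(coordinates `k : Fin m` representing `e_{k+1}`) and the second component carries the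
zero multiplication. -/
noncomputable def NFmul (m q : ℕ) (x y : (Fin m → ℂ) × (Fin q → ℂ)) :
    (Fin m → ℂ) × (Fin q → ℂ) :=
  (fun k => ∑ i : Fin m, ∑ j : Fin m,
      if (i : ℕ) + (j : ℕ) + 1 = (k : ℕ)
      then ((((i : ℕ) + (j : ℕ) + 1).choose ((j : ℕ) + 1) : ℕ) : ℂ) * x.1 i * y.1 j
      else 0,
   0)

noncomputable def NFbil (m q : ℕ) :
    ((Fin m → ℂ) × (Fin q → ℂ)) →ₗ[ℂ] ((Fin m → ℂ) × (Fin q → ℂ)) →ₗ[ℂ]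
      ((Fin m → ℂ) × (Fin q → ℂ)) :=
  LinearMap.mk₂ ℂ (NFmul m q)
    (fun x x' y => by
      refine Prod.ext ?_ (by funext j; simp [NFmul])
      funext k
      simp only [NFmul, Prod.fst_add, Pi.add_apply]
      rw [← Finset.sum_add_distrib]
      refine Finset.sum_congr rfl fun i _ => ?_
      rw [← Finset.sum_add_distrib]
      refine Finset.sum_congr rfl fun j _ => ?_
      split <;> ring)
    (fun c x y => by
      refine Prod.ext ?_ (by funext j; simp [NFmul])
      funext k
      simp only [NFmul, Prod.smul_fst, Pi.smul_apply, smul_eq_mul, Finset.mul_sum]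
      refine Finset.sum_congr rfl fun i _ => ?_
      refine Finset.sum_congr rfl fun j _ => ?_
      split <;> ring)
    (fun x y y' => by
      refine Prod.ext ?_ (by funext j; simp [NFmul])
      funext k
      simp only [NFmul, Prod.fst_add, Pi.add_apply]
      rw [← Finset.sum_add_distrib]
      refine Finset.sum_congr rfl fun i _ => ?_
      rw [← Finset.sum_add_distrib]
      refine Finset.sum_congr rfl fun j _ => ?_
      split <;> ring)
    (fun c x y => by
      refine Prod.ext ?_ (by funext j; simp [NFmul])
      funext k
      simp only [NFmul, Prod.smul_fst, Pi.smul_apply, smul_eq_mul, Finset.mul_sum]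
      refine Finset.sum_congr rfl fun i _ => ?_
      refine Finset.sum_congr rfl fun j _ => ?_
      split <;> ring)

lemma NFmul_indicator (m q : ℕ) (a c : Fin m) (u v : Fin q → ℂ) :
    NFmul m q (fun i => if a = i then 1 else 0, u) (fun i => if c = i then 1 else 0, v)
      = (fun k : Fin m => if (a : ℕ) + (c : ℕ) + 1 = (k : ℕ)
          then ((((a : ℕ) + (c : ℕ) + 1).choose ((c : ℕ) + 1) : ℕ) : ℂ) else 0,
         (0 : Fin q → ℂ)) := by
  refine Prod.ext ?_ rfl
  funext k
  simp only [NFmul]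
  rw [Finset.sum_eq_single a]
  · rw [Finset.sum_eq_single c]
    · simp
    · intro j _ hj; simp [hj.symm]
    · intro h; exact absurd (Finset.mem_univ c) h
  · intro i _ hi
    refine Finset.sum_eq_zero fun j _ => ?_
    simp [hi.symm]
  · intro h; exact absurd (Finset.mem_univ a) h

lemma NFmul_zero_left (m q : ℕ) (u : Fin q → ℂ) (y : (Fin m → ℂ) × (Fin q → ℂ)) :
    NFmul m q (0, u) y = 0 := by
  refine Prod.ext ?_ rfl
  funext k
  simp [NFmul]

lemma NFmul_zero_right (m q : ℕ) (v : Fin q → ℂ) (x : (Fin m → ℂ) × (Fin q → ℂ)) :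
    NFmul m q x (0, v) = 0 := by
  refine Prod.ext ?_ rfl
  funext k
  simp [NFmul]

/-- Lemma: if `n - p ≥ 3` and all the `f_i` lie in the first component `Z_1` of the
natural gradation (`r_i = 1` for all `i`), then `Z` splits:
`Z ≅ NF_{n-p} ⊕ ℂ^p`, an isomorphism of algebras onto the product of the
null-filiform algebra and the abelian algebra `ℂ^p`. -/
theorem graded_p_filiform_all_r_one_split
    {Z : Type*} [AddCommGroup Z] [Module ℂ Z]
    (mul : Z →ₗ[ℂ] Z →ₗ[ℂ] Z) (hzin : IsZinbiel mul)
    (n p : ℕ) (hpn : p < n)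
    (e f : ℕ → Z)
    -- `{e_1, …, e_{n-p}, f_1, …, f_p}` is a basis of the `n`-dimensional algebra `Z`
    (hli : LinearIndependent ℂ (adaptedFam (n - p) p e f))
    (hsp : Submodule.span ℂ (Set.range (adaptedFam (n - p) p e f)) = ⊤)
    -- the basis is adapted of first type: `e_1 ∘ e_i = e_{i+1}`, `e_1 ∘ e_{n-p} = 0`,
    -- `e_1 ∘ f_j = 0`
    (hee : ∀ i, 1 ≤ i → i ≤ n - p - 1 → mul (e 1) (e i) = e (i + 1))
    (hetop : mul (e 1) (e (n - p)) = 0)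
    (hef : ∀ j, 1 ≤ j → j ≤ p → mul (e 1) (f j) = 0)
    -- the natural gradation `Z = Z_1 ⊕ ⋯ ⊕ Z_{n-p}` : `W i` is the `i`-th component,
    -- the gradation is multiplicative and generated in degree one
    -- (`Z_{i+1} = Z_1 ∘ Z_i`, coming from `Z_i = Z^i/Z^{i+1}`), and `e_i ∈ Z_i`
    (W : ℕ → Submodule ℂ Z)
    (hW0 : W 0 = ⊥)
    (hWhigh : ∀ i, n - p < i → W i = ⊥)
    (hWint : DirectSum.IsInternal W)
    (hWmul : ∀ i j, ∀ x ∈ W i, ∀ y ∈ W j, mul x y ∈ W (i + j))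
    (hWgen : ∀ i, 1 ≤ i → W (i + 1) = Submodule.span ℂ {z | ∃ x ∈ W 1, ∃ y ∈ W i, z = mul x y})
    (heW : ∀ i, 1 ≤ i → i ≤ n - p → e i ∈ W i)
    -- `Z` is `p`-filiform with characteristic vector `e_1 ∉ Z²`
    (hfil : CharSeqMax mul n p)
    (he1sq : e 1 ∉ algSq mul)
    (h3 : 3 ≤ n - p)
    (hfW1 : ∀ i, 1 ≤ i → i ≤ p → f i ∈ W 1) :
    ∃ φ : Z ≃ₗ[ℂ] (Fin (n - p) → ℂ) × (Fin p → ℂ),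
      ∀ x y : Z, φ (mul x y) = NFmul (n - p) p (φ x) (φ y) := by
  classical
  set m := n - p with hm
  -- the basis
  let b : Basis (Fin m ⊕ Fin p) ℂ Z := Basis.mk hli hsp.ge
  have hbl : ∀ a : Fin m, b (Sum.inl a) = e ((a : ℕ) + 1) := fun a => by
    simp [b, Basis.mk_apply, adaptedFam]
  have hbr : ∀ j : Fin p, b (Sum.inr j) = f ((j : ℕ) + 1) := fun j => by
    simp [b, Basis.mk_apply, adaptedFam]
  -- `W 2` is spanned by `e 2`
  have hW2 : W 2 ≤ Submodule.span ℂ {e 2} := by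
    set U : ℕ → Submodule ℂ Z :=
      fun i => if i = 2 then Submodule.span ℂ {e 2} else W i with hU
    have hUle : ∀ i, U i ≤ W i := by
      intro i
      by_cases h : i = 2
      · subst h
        simp only [U, if_pos rfl]
        exact Submodule.span_le.2 (by
          intro z hz
          rw [Set.mem_singleton_iff] at hz
          subst hz
          exact heW 2 (by norm_num) (by omega))
      · simp [U, h]
    have hUsup : ⨆ i, U i = ⊤ := by
      rw [eq_top_iff, ← hsp]
      refine Submodule.span_le.2 ?_
      rintro _ ⟨s, rfl⟩
      rcases s with a | j
      · show e ((a : ℕ) + 1) ∈ _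
        by_cases ha : (a : ℕ) + 1 = 2
        · refine Submodule.mem_iSup_of_mem 2 ?_
          rw [ha]
          simp only [U, if_pos rfl]
          exact Submodule.mem_span_singleton_self _
        · refine Submodule.mem_iSup_of_mem ((a : ℕ) + 1) ?_
          simp only [U, if_neg ha]
          exact heW _ (by omega) (by omega)
      · show f ((j : ℕ) + 1) ∈ _
        refine Submodule.mem_iSup_of_mem 1 ?_
        simp only [U, if_neg (by norm_num : (1 : ℕ) ≠ 2)]
        exact hfW1 _ (by omega) (by omega)
    intro w hw
    obtain ⟨c, hc, hcs⟩ := (Submodule.mem_iSup_iff_exists_finsupp U w).1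
      (by rw [hUsup]; trivial)
    have hc2 : c 2 ∈ Submodule.span ℂ {e 2} := by
      have := hc 2
      simpa only [U, if_pos rfl] using this
    have hkey : w - c 2 = 0 := by
      have h1 : w - c 2 ∈ W 2 := sub_mem hw (hUle 2 (hc 2))
      have h2 : w - c 2 ∈ ⨆ (j) (_ : j ≠ 2), W j := by
        have hws : w - c 2 = ∑ i ∈ c.support.erase 2, c i := by
          rw [← hcs, Finsupp.sum]
          by_cases h2s : 2 ∈ c.support
          · rw [← Finset.add_sum_erase _ _ h2s]; exact add_sub_cancel_left _ _
          · rw [Finset.erase_eq_of_notMem h2s,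
              Finsupp.notMem_support_iff.1 h2s, sub_zero]
        rw [hws]
        refine Submodule.sum_mem _ fun i hi => ?_
        exact Submodule.mem_iSup_of_mem i
          (Submodule.mem_iSup_of_mem (Finset.ne_of_mem_erase hi) (hUle i (hc i)))
      exact Submodule.disjoint_def.mp (hWint.submodule_iSupIndep 2) _ h1 h2
    rw [sub_eq_zero] at hkey
    rw [hkey]
    exact hc2
  -- basis vectors are nonzero
  have e3ne : e 3 ≠ 0 := by
    have h : e 3 = b (Sum.inl ⟨2, by omega⟩) := by rw [hbl]
    rw [h]; exact b.ne_zero _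
  -- products of the e's
  have heE : ∀ s a c : ℕ, a + c = s → a + c + 2 ≤ m →
      mul (e (a + 1)) (e (c + 1))
        = (((a + c + 1).choose (c + 1) : ℕ) : ℂ) • e (a + c + 2) := by
    intro s
    induction s using Nat.strong_induction_on with
    | _ s ih =>
      intro a c hs hle
      match a, hs with
      | 0, hs =>
        rw [hee (c + 1) (by omega) (by omega)]
        norm_num
      | (a' + 1), hs =>
        have h1 : mul (e 1) (e (a' + 1)) = e (a' + 1 + 1) :=
          hee (a' + 1) (by omega) (by omega)
        rw [← h1, hzin]
        have e2 := ih (c + a') (by omega) c a' rfl (by omega)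
        rw [Nat.add_comm c a'] at e2
        rw [ih (a' + c) (by omega) a' c rfl (by omega), e2, map_smul, map_smul,
          hee (a' + c + 2) (by omega) (by omega), ← add_smul]
        have hch : (a' + c + 1).choose (c + 1) + (a' + c + 1).choose (a' + 1)
            = (a' + 1 + c + 1).choose (c + 1) := by
          have h2 : (a' + c + 1).choose (a' + 1) = (a' + c + 1).choose c := by
            have := Nat.choose_symm (n := a' + c + 1) (k := c) (by omega)
            rw [show a' + c + 1 - c = a' + 1 by omega] at this
            exact this
          rw [h2, show a' + 1 + c + 1 = (a' + c + 1) + 1 by omega]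
          conv_rhs => rw [Nat.choose_succ_succ]
          simp only [Nat.succ_eq_add_one]
          omega
        rw [show a' + c + 2 + 1 = a' + 1 + c + 2 by omega, ← hch, Nat.cast_add,
          add_smul]
  -- vanishing of high-degree products
  have heTop : ∀ i j, 1 ≤ i → i ≤ m → 1 ≤ j → j ≤ m → m < i + j →
      mul (e i) (e j) = 0 := by
    intro i j hi1 him hj1 hjm hij
    have := hWmul i j (e i) (heW i hi1 him) (e j) (heW j hj1 hjm)
    rw [hWhigh (i + j) (by omega)] at this
    simpa using this
  -- f ∘ e₁ = 0
  have fe1 : ∀ j, 1 ≤ j → j ≤ p → mul (f j) (e 1) = 0 := by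
    intro j hj1 hjp
    have hmem : mul (f j) (e 1) ∈ W 2 :=
      hWmul 1 1 _ (hfW1 j hj1 hjp) _ (heW 1 (by omega) (by omega))
    obtain ⟨c, hc⟩ := Submodule.mem_span_singleton.1 (hW2 hmem)
    have hz := hzin (e 1) (f j) (e 1)
    rw [hef j hj1 hjp] at hz
    simp only [map_zero, LinearMap.zero_apply, add_zero] at hz
    rw [← hc, map_smul, hee 2 (by omega) (by omega)] at hz
    have hc0 : c = 0 := by
      rcases smul_eq_zero.1 hz.symm with h | h
      · exact h
      · exact absurd (by norm_num at h ⊢; exact h) e3ne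
    rw [← hc, hc0, zero_smul]
  -- f ∘ f = 0
  have hff : ∀ j k, 1 ≤ j → j ≤ p → 1 ≤ k → k ≤ p → mul (f j) (f k) = 0 := by
    intro j k hj1 hjp hk1 hkp
    have hmem : mul (f j) (f k) ∈ W 2 :=
      hWmul 1 1 _ (hfW1 j hj1 hjp) _ (hfW1 k hk1 hkp)
    obtain ⟨c, hc⟩ := Submodule.mem_span_singleton.1 (hW2 hmem)
    have hz := hzin (f j) (f k) (e 1)
    rw [fe1 k hk1 hkp, hef k hk1 hkp] at hz
    simp only [map_zero, add_zero] at hz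
    have he21 : mul (e 2) (e 1) = ((2 : ℕ) : ℂ) • e 3 := by
      have := heE 1 1 0 rfl (by omega)
      norm_num at this
      convert this using 2
      norm_num
    rw [← hc, LinearMap.map_smul, LinearMap.smul_apply, he21, smul_smul] at hz
    have hc0 : c = 0 := by
      rcases smul_eq_zero.1 hz with h | h
      · rcases mul_eq_zero.1 h with h' | h'
        · exact h'
        · norm_num at h'
      · exact absurd h e3ne
    rw [← hc, hc0, zero_smul]
  -- f ∘ e = 0
  have fei : ∀ j i, 1 ≤ j → j ≤ p → 1 ≤ i → i ≤ m → mul (f j) (e i) = 0 := by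
    intro j i hj1 hjp hi1 him
    rcases Nat.lt_or_ge i 2 with h | h
    · have : i = 1 := by omega
      rw [this]; exact fe1 j hj1 hjp
    · obtain ⟨t, rfl⟩ : ∃ t, i = t + 2 := ⟨i - 2, by omega⟩
      have hz := hzin (f j) (e 1) (e (t + 1))
      rw [fe1 j hj1 hjp] at hz
      simp only [map_zero, LinearMap.zero_apply] at hz
      have h1 : mul (e 1) (e (t + 1)) = e (t + 1 + 1) :=
        hee (t + 1) (by omega) (by omega)
      have h2 : mul (e (t + 1)) (e 1) = (((t + 1).choose 1 : ℕ) : ℂ) • e (t + 2) := by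
        have := heE t t 0 rfl (by omega)
        norm_num at this ⊢
        convert this using 2
      rw [h1, h2, map_smul] at hz
      rw [show t + 1 + 1 = t + 2 by omega] at hz
      have hsum : (1 + ((t + 1).choose 1 : ℂ)) • mul (f j) (e (t + 2)) = 0 := by
        rw [add_smul, one_smul]
        exact hz.symm
      have hne : (1 + ((t + 1).choose 1 : ℂ)) ≠ 0 := by
        rw [Nat.choose_one_right]
        have h1c : (1 : ℂ) + ((t + 1 : ℕ) : ℂ) = ((t + 2 : ℕ) : ℂ) := by
          push_cast; ring
        rw [h1c]
        exact_mod_cast (by omega : (t + 2 : ℕ) ≠ 0)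
      rcases smul_eq_zero.1 hsum with h | h
      · exact absurd h hne
      · exact h
  -- e ∘ f = 0
  have eif : ∀ i j, 1 ≤ i → i ≤ m → 1 ≤ j → j ≤ p → mul (e i) (f j) = 0 := by
    intro i j hi1 him hj1 hjp
    obtain ⟨t, rfl⟩ : ∃ t, i = t + 1 := ⟨i - 1, by omega⟩
    clear hi1
    induction t with
    | zero => exact hef j hj1 hjp
    | succ t iht =>
      have h1 : mul (e 1) (e (t + 1)) = e (t + 1 + 1) :=
        hee (t + 1) (by omega) (by omega)
      have hz := hzin (e 1) (e (t + 1)) (f j)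
      rw [h1, iht (by omega), fei j (t + 1) hj1 hjp (by omega) (by omega)] at hz
      simpa using hz
  -- the isomorphism
  let σ := LinearEquiv.sumArrowLequivProdArrow (Fin m) (Fin p) ℂ ℂ
  let φ : Z ≃ₗ[ℂ] (Fin m → ℂ) × (Fin p → ℂ) := b.equivFun.trans σ
  have hφl : ∀ a : Fin m,
      φ (b (Sum.inl a)) = (fun i => if a = i then 1 else 0, 0) := by
    intro a
    refine Prod.ext (funext fun i => ?_) (funext fun j => ?_)
    · show (σ (b.equivFun (b (Sum.inl a)))).1 i = _
      rw [LinearEquiv.sumArrowLequivProdArrow_apply_fst, Basis.equivFun_self]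
      simp
    · show (σ (b.equivFun (b (Sum.inl a)))).2 j = _
      rw [LinearEquiv.sumArrowLequivProdArrow_apply_snd, Basis.equivFun_self]
      simp
  have hφr : ∀ j : Fin p,
      φ (b (Sum.inr j)) = (0, fun i => if j = i then 1 else 0) := by
    intro j
    refine Prod.ext (funext fun i => ?_) (funext fun i => ?_)
    · show (σ (b.equivFun (b (Sum.inr j)))).1 i = _
      rw [LinearEquiv.sumArrowLequivProdArrow_apply_fst, Basis.equivFun_self]
      simp
    · show (σ (b.equivFun (b (Sum.inr j)))).2 i = _
      rw [LinearEquiv.sumArrowLequivProdArrow_apply_snd, Basis.equivFun_self]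
      simp
  refine ⟨φ, ?_⟩
  have hmain : ∀ s t, φ (mul (b s) (b t)) = NFbil m p (φ (b s)) (φ (b t)) := by
    rintro (a | j) (c | k)
    · -- e ∘ e
      rw [hφl, hφl]
      show φ (mul (b (Sum.inl a)) (b (Sum.inl c))) = NFmul m p
        (fun i => if a = i then 1 else 0, 0) (fun i => if c = i then 1 else 0, 0)
      rw [NFmul_indicator, hbl, hbl]
      by_cases h : (a : ℕ) + (c : ℕ) + 2 ≤ m
      · rw [heE ((a : ℕ) + (c : ℕ)) a c rfl h, map_smul]
        have hd : e ((a : ℕ) + (c : ℕ) + 2) = b (Sum.inl ⟨(a : ℕ) + (c : ℕ) + 1, by omega⟩) := by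
          rw [hbl]
        rw [hd, hφl]
        refine Prod.ext (funext fun k => ?_) ?_
        · show (((a : ℕ) + (c : ℕ) + 1).choose ((c : ℕ) + 1) : ℂ) *
            (if (⟨(a : ℕ) + (c : ℕ) + 1, by omega⟩ : Fin m) = k then 1 else 0)
            = if (a : ℕ) + (c : ℕ) + 1 = (k : ℕ)
              then ((((a : ℕ) + (c : ℕ) + 1).choose ((c : ℕ) + 1) : ℕ) : ℂ) else 0
          by_cases hk : (a : ℕ) + (c : ℕ) + 1 = (k : ℕ)
          · rw [if_pos hk, if_pos (Fin.ext hk), mul_one]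
          · rw [if_neg hk, if_neg (fun hcon => hk (congrArg Fin.val hcon)), mul_zero]
        · show ((((a : ℕ) + (c : ℕ) + 1).choose ((c : ℕ) + 1) : ℂ)) • (0 : Fin p → ℂ) = 0
          exact smul_zero _
      · rw [heTop ((a : ℕ) + 1) ((c : ℕ) + 1) (by omega) (by omega) (by omega)
          (by omega) (by omega), map_zero]
        refine Prod.ext (funext fun k => ?_) rfl
        show (0 : Fin m → ℂ) k = if (a : ℕ) + (c : ℕ) + 1 = (k : ℕ)
            then ((((a : ℕ) + (c : ℕ) + 1).choose ((c : ℕ) + 1) : ℕ) : ℂ) else 0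
        rw [if_neg (by have := k.isLt; omega)]
        rfl
    · -- e ∘ f
      rw [hφl, hφr, hbl, hbr, eif ((a : ℕ) + 1) ((k : ℕ) + 1) (by omega) (by omega)
        (by omega) (by omega), map_zero]
      exact (NFmul_zero_right m p _ _).symm
    · -- f ∘ e
      rw [hφr, hφl, hbr, hbl, fei ((j : ℕ) + 1) ((c : ℕ) + 1) (by omega) (by omega)
        (by omega) (by omega), map_zero]
      exact (NFmul_zero_left m p _ _).symm
    · -- f ∘ f
      rw [hφr, hφr, hbr, hbr, hff ((j : ℕ) + 1) ((k : ℕ) + 1) (by omega) (by omega)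
        (by omega) (by omega), map_zero]
      exact (NFmul_zero_left m p _ _).symm
  have hext : (LinearMap.compr₂ mul (φ : Z →ₗ[ℂ] (Fin m → ℂ) × (Fin p → ℂ)))
      = ((NFbil m p).comp (φ : Z →ₗ[ℂ] _)).compl₂ (φ : Z →ₗ[ℂ] _) := by
    refine b.ext fun s => ?_
    refine b.ext fun t => ?_
    simpa [LinearMap.compr₂_apply, LinearMap.compl₂_apply, LinearMap.comp_apply]
      using hmain s t
  intro x y
  have := LinearMap.congr_fun (LinearMap.congr_fun hext x) y
  simpa [LinearMap.compr₂_apply, LinearMap.compl₂_apply, LinearMap.comp_apply,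
    NFbil, LinearMap.mk₂_apply] using this
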